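/- Let F be the free semigroup on three generators a, b, c, and let c₀ be the smallest congruence on F containing, for all elements x, y, z, t ∈ F, the pairs (xyzt, yxtz), (x²y, y²x), and (xy², (xy)²). Then the images in the quotient F/c₀ of the six words a², b², a³b, ab², a²b, a³ are pairwise distinct. -/

import Mathlib

/-- All substitution instances of the identities
`xyzt = yxtz`, `x²y = y²x`, `xy² = (xy)²`. -/
def m42Rel : FreeSemigroup (Fin 3) → FreeSemigroup (Fin 3) → Prop := fun u v =>
  (∃ x y z t : FreeSemigroup (Fin 3), u = x * y * z * t ∧ v = y * x * t * z) ∨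
  (∃ x y : FreeSemigroup (Fin 3), u = x * x * y ∧ v = y * y * x) ∨
  (∃ x y : FreeSemigroup (Fin 3), u = x * (y * y) ∧ v = x * y * (x * y))

namespace M42Aux

def S := Fin 13

instance : DecidableEq S := inferInstanceAs (DecidableEq (Fin 13))
instance : Fintype S := inferInstanceAs (Fintype (Fin 13))

def tbl : Fin 13 → Fin 13 → Fin 13 :=
  ![![2, 3, 6, 7, 8, 9, 6, 12, 12, 12, 9, 12, 12],
    ![4, 5, 9, 10, 7, 11, 12, 12, 9, 12, 12, 11, 12],
    ![6, 7, 6, 12, 12, 12, 6, 12, 12, 12, 12, 12, 12],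
    ![8, 9, 12, 9, 12, 12, 12, 12, 12, 12, 12, 12, 12],
    ![9, 10, 12, 12, 9, 12, 12, 12, 12, 12, 12, 12, 12],
    ![7, 11, 12, 12, 12, 11, 12, 12, 12, 12, 12, 11, 12],
    ![6, 12, 6, 12, 12, 12, 6, 12, 12, 12, 12, 12, 12],
    ![12, 12, 12, 12, 12, 12, 12, 12, 12, 12, 12, 12, 12],
    ![12, 9, 12, 12, 12, 12, 12, 12, 12, 12, 12, 12, 12],
    ![12, 12, 12, 12, 12, 12, 12, 12, 12, 12, 12, 12, 12],
    ![9, 12, 12, 12, 12, 12, 12, 12, 12, 12, 12, 12, 12],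
    ![12, 11, 12, 12, 12, 11, 12, 12, 12, 12, 12, 11, 12],
    ![12, 12, 12, 12, 12, 12, 12, 12, 12, 12, 12, 12, 12]]

set_option maxHeartbeats 4000000 in
instance : Semigroup S where
  mul a b := tbl a b
  mul_assoc := by decide

set_option maxHeartbeats 4000000 in
lemma id1 : ∀ x y z t : S, x * y * z * t = y * x * t * z := by decide
set_option maxHeartbeats 4000000 in
lemma id2 : ∀ x y : S, x * x * y = y * y * x := by decide
set_option maxHeartbeats 4000000 in
lemma id3 : ∀ x y : S, x * (y * y) = x * y * (x * y) := by decide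

def gen : Fin 3 → S := fun i => (![0, 1, 0] : Fin 3 → Fin 13) i

def f : FreeSemigroup (Fin 3) →ₙ* S := FreeSemigroup.lift gen

lemma key : conGen m42Rel ≤ Con.ker f := by
  apply Con.conGen_le.mpr
  rintro u v (⟨x, y, z, t, rfl, rfl⟩ | ⟨x, y, rfl, rfl⟩ | ⟨x, y, rfl, rfl⟩) <;>
    show f _ = f _ <;> simp only [map_mul]
  · exact id1 _ _ _ _
  · exact id2 _ _
  · exact id3 _ _

lemma sep {u v : FreeSemigroup (Fin 3)}
    (h : (u : (conGen m42Rel).Quotient) = v) : f u = f v :=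
  Con.le_def.mp key ((Con.eq _).mp h)

end M42Aux

/-- In the free semigroup on three generators `a b c` modulo the smallest
congruence generated by all instances of `xyzt = yxtz`, `x²y = y²x`,
`xy² = (xy)²`, the images of `a²`, `b²`, `a³b`, `ab²`, `a²b`, `a³`
are pairwise distinct. -/
theorem stmt_11 :
    let a := FreeSemigroup.of (0 : Fin 3)
    let b := FreeSemigroup.of (1 : Fin 3)
    ([a * a, b * b, a * a * a * b, a * b * b, a * a * b, a * a * a].map
        (fun w => (w : (conGen m42Rel).Quotient))).Pairwise (· ≠ ·) := by
  intro a b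
  have ne : ∀ u v : FreeSemigroup (Fin 3), M42Aux.f u ≠ M42Aux.f v →
      (u : (conGen m42Rel).Quotient) ≠ v := fun u v hf h => hf (M42Aux.sep h)
  have fa : M42Aux.f a = M42Aux.gen 0 := FreeSemigroup.lift_of _ _
  have fb : M42Aux.f b = M42Aux.gen 1 := FreeSemigroup.lift_of _ _
  show List.Pairwise (· ≠ ·)
    ([↑(a*a), ↑(b*b), ↑(a*a*a*b), ↑(a*b*b), ↑(a*a*b), ↑(a*a*a)] :
      List (conGen m42Rel).Quotient)
  refine List.Pairwise.cons ?_ (List.Pairwise.cons ?_ (List.Pairwise.cons ?_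
    (List.Pairwise.cons ?_ (List.Pairwise.cons ?_ (List.pairwise_singleton _ _))))) <;>
    (intro x hx;
     simp only [List.mem_cons, List.mem_singleton, List.not_mem_nil, or_false] at hx;
     rcases hx with rfl | rfl | rfl | rfl | rfl <;>
       (apply ne; simp only [map_mul, fa, fb]; decide))
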